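/- Let K = 2^m where m is a positive integer, and let d ≥ 1. If A, B are real symmetric positive definite d×d matrices satisfying (1 − 1/(2K)) I ⪯ A ⪯ I and (1 − 1/(2K)) I ⪯ B ⪯ I, then (1/2) ‖(AB)^K + (BA)^K‖ ≤ ‖(1/2)(AB + BA)‖^K. -/

import Mathlib

open scoped RealInnerProductSpace

section OpLemmas

variable {F : Type*} [NormedAddCommGroup F] [InnerProductSpace ℝ F]

/-- Polarization: a symmetric operator whose quadratic form is bounded by `c` has norm `≤ c`. -/
lemma opnorm_le_of_qf (T : F →L[ℝ] F)
    (hs : ∀ x y : F, ⟪T x, y⟫ = ⟪x, T y⟫) {c : ℝ} (hc : 0 ≤ c)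
    (h : ∀ x : F, |⟪x, T x⟫| ≤ c * ‖x‖ ^ 2) : ‖T‖ ≤ c := by
  have bil : ∀ u v : F, ⟪u, T v⟫ ≤ c / 2 * (‖u‖ ^ 2 + ‖v‖ ^ 2) := by
    intro u v
    have hswap : ⟪v, T u⟫ = ⟪u, T v⟫ := by rw [← hs u v, real_inner_comm]
    have e1 : ⟪u + v, T (u + v)⟫ = ⟪u, T u⟫ + 2 * ⟪u, T v⟫ + ⟪v, T v⟫ := by
      simp only [map_add, inner_add_left, inner_add_right, hswap]; ring
    have e2 : ⟪u - v, T (u - v)⟫ = ⟪u, T u⟫ - 2 * ⟪u, T v⟫ + ⟪v, T v⟫ := by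
      simp only [map_sub, inner_sub_left, inner_sub_right, hswap]; ring
    have p1 : ‖u + v‖ ^ 2 = ‖u‖ ^ 2 + 2 * ⟪u, v⟫ + ‖v‖ ^ 2 := norm_add_sq_real u v
    have p2 : ‖u - v‖ ^ 2 = ‖u‖ ^ 2 - 2 * ⟪u, v⟫ + ‖v‖ ^ 2 := norm_sub_sq_real u v
    have h1 := (abs_le.mp (h (u + v))).2
    have h2 := (abs_le.mp (h (u - v))).1
    nlinarith
  refine T.opNorm_le_bound hc fun x => ?_
  rcases eq_or_ne (T x) 0 with hTx | hTx
  · rw [hTx, norm_zero]; positivity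
  · have hnTx : 0 < ‖T x‖ := norm_pos_iff.mpr hTx
    have hnx : 0 < ‖x‖ := by
      rcases (norm_nonneg x).eq_or_lt with h0 | h0
      · exact absurd (by simp [norm_eq_zero.mp h0.symm]) hTx
      · exact h0
    set t : ℝ := Real.sqrt (‖x‖ / ‖T x‖) with ht_def
    have ht : 0 < t := Real.sqrt_pos.mpr (by positivity)
    have ht2 : t ^ 2 = ‖x‖ / ‖T x‖ := Real.sq_sqrt (by positivity)
    have key : ⟪T x, T x⟫ = ⟪t • T x, T ((1 / t) • x)⟫ := by
      rw [map_smul, real_inner_smul_left, real_inner_smul_right]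
      field_simp
    have hb := bil (t • T x) ((1 / t) • x)
    rw [← key] at hb
    have hn1 : ‖t • T x‖ ^ 2 = t ^ 2 * ‖T x‖ ^ 2 := by
      rw [norm_smul]; simp [Real.norm_eq_abs, abs_of_pos ht, mul_pow]
    have hn2 : ‖(1 / t) • x‖ ^ 2 = ‖x‖ ^ 2 / t ^ 2 := by
      rw [norm_smul]; simp [Real.norm_eq_abs, abs_of_pos ht, mul_pow]
      field_simp
    have e3 : t ^ 2 * ‖T x‖ ^ 2 = ‖x‖ * ‖T x‖ := by
      rw [ht2]; field_simp
    have e4 : ‖x‖ ^ 2 / t ^ 2 = ‖x‖ * ‖T x‖ := by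
      rw [ht2]; field_simp
    have hTT : ⟪T x, T x⟫ = ‖T x‖ ^ 2 := real_inner_self_eq_norm_sq _
    rw [hTT, hn1, hn2, e3, e4] at hb
    -- ‖T x‖ ^ 2 ≤ c / 2 * (‖x‖ * ‖T x‖ + ‖x‖ * ‖T x‖) = c * ‖x‖ * ‖T x‖
    have : ‖T x‖ ^ 2 ≤ c * ‖x‖ * ‖T x‖ := by nlinarith
    nlinarith

/-- Quadratic form bounded by operator norm. -/
lemma qf_le_opnorm (T : F →L[ℝ] F) (x : F) : ⟪x, T x⟫ ≤ ‖T‖ * ‖x‖ ^ 2 := by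
  have h1 : ⟪x, T x⟫ ≤ ‖x‖ * ‖T x‖ := real_inner_le_norm x (T x)
  have h2 : ‖T x‖ ≤ ‖T‖ * ‖x‖ := T.le_opNorm x
  nlinarith [norm_nonneg x]

/-- Centered product positivity: if `a•1 ⪯ T ⪯ 1`, `b•1 ⪯ U ⪯ 1` and `(1+a)(1+b) ≥ 2`,
then `⟪T x, U x⟫ ≥ 0`. -/
lemma inner_mul_nonneg (T U : F →L[ℝ] F) (a b : ℝ)
    (ha0 : 0 ≤ a) (ha1 : a ≤ 1) (hb0 : 0 ≤ b) (hb1 : b ≤ 1)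
    (hTs : ∀ x y : F, ⟪T x, y⟫ = ⟪x, T y⟫)
    (hUs : ∀ x y : F, ⟪U x, y⟫ = ⟪x, U y⟫)
    (hT1 : ∀ x : F, a * ‖x‖ ^ 2 ≤ ⟪x, T x⟫) (hT2 : ∀ x : F, ⟪x, T x⟫ ≤ ‖x‖ ^ 2)
    (hU1 : ∀ x : F, b * ‖x‖ ^ 2 ≤ ⟪x, U x⟫) (hU2 : ∀ x : F, ⟪x, U x⟫ ≤ ‖x‖ ^ 2)
    (hab : 2 ≤ (1 + a) * (1 + b)) (x : F) : 0 ≤ ⟪T x, U x⟫ := by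
  set eT : F →L[ℝ] F := T - ((1 + a) / 2) • 1 with heT_def
  set eU : F →L[ℝ] F := U - ((1 + b) / 2) • 1 with heU_def
  have heT_app : ∀ z : F, eT z = T z - ((1 + a) / 2) • z := by
    intro z; simp [heT_def]
  have heU_app : ∀ z : F, eU z = U z - ((1 + b) / 2) • z := by
    intro z; simp [heU_def]
  have heTq : ∀ z : F, |⟪z, eT z⟫| ≤ (1 - a) / 2 * ‖z‖ ^ 2 := by
    intro z
    have : ⟪z, eT z⟫ = ⟪z, T z⟫ - (1 + a) / 2 * ‖z‖ ^ 2 := by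
      rw [heT_app, inner_sub_right, real_inner_smul_right, real_inner_self_eq_norm_sq]
    rw [this, abs_le]
    constructor
    · nlinarith [hT1 z, sq_nonneg ‖z‖]
    · nlinarith [hT2 z, sq_nonneg ‖z‖]
  have heUq : ∀ z : F, |⟪z, eU z⟫| ≤ (1 - b) / 2 * ‖z‖ ^ 2 := by
    intro z
    have : ⟪z, eU z⟫ = ⟪z, U z⟫ - (1 + b) / 2 * ‖z‖ ^ 2 := by
      rw [heU_app, inner_sub_right, real_inner_smul_right, real_inner_self_eq_norm_sq]
    rw [this, abs_le]
    constructor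
    · nlinarith [hU1 z, sq_nonneg ‖z‖]
    · nlinarith [hU2 z, sq_nonneg ‖z‖]
  have heTs : ∀ u v : F, ⟪eT u, v⟫ = ⟪u, eT v⟫ := by
    intro u v
    rw [heT_app, heT_app, inner_sub_left, inner_sub_right, hTs,
      real_inner_smul_left, real_inner_smul_right]
  have heUs : ∀ u v : F, ⟪eU u, v⟫ = ⟪u, eU v⟫ := by
    intro u v
    rw [heU_app, heU_app, inner_sub_left, inner_sub_right, hUs,
      real_inner_smul_left, real_inner_smul_right]
  have hnT : ‖eT‖ ≤ (1 - a) / 2 := opnorm_le_of_qf eT heTs (by linarith) heTq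
  have hnU : ‖eU‖ ≤ (1 - b) / 2 := opnorm_le_of_qf eU heUs (by linarith) heUq
  have hTxn : ‖eT x‖ ≤ (1 - a) / 2 * ‖x‖ :=
    le_trans (eT.le_opNorm x) (by nlinarith [norm_nonneg x, eT.le_opNorm x])
  have hUxn : ‖eU x‖ ≤ (1 - b) / 2 * ‖x‖ :=
    le_trans (eU.le_opNorm x) (by nlinarith [norm_nonneg x, eU.le_opNorm x])
  have hTx : T x = ((1 + a) / 2) • x + eT x := by rw [heT_app]; abel
  have hUx : U x = ((1 + b) / 2) • x + eU x := by rw [heU_app]; abel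
  have expand : ⟪T x, U x⟫ =
      (1 + a) / 2 * ((1 + b) / 2) * ‖x‖ ^ 2 + (1 + a) / 2 * ⟪x, eU x⟫
        + (1 + b) / 2 * ⟪eT x, x⟫ + ⟪eT x, eU x⟫ := by
    rw [hTx, hUx, inner_add_left, inner_add_right, inner_add_right,
      real_inner_smul_left, real_inner_smul_left, real_inner_smul_right,
      real_inner_smul_right, real_inner_self_eq_norm_sq]
    ring
  have b1 : -((1 + b) / 2 * ((1 - a) / 2 * ‖x‖ ^ 2)) ≤ (1 + b) / 2 * ⟪eT x, x⟫ := by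
    rw [heTs x x]
    have := (abs_le.mp (heTq x)).1
    nlinarith
  have b2 : -((1 + a) / 2 * ((1 - b) / 2 * ‖x‖ ^ 2)) ≤ (1 + a) / 2 * ⟪x, eU x⟫ := by
    have := (abs_le.mp (heUq x)).1
    nlinarith
  have b3 : -((1 - a) / 2 * ((1 - b) / 2) * ‖x‖ ^ 2) ≤ ⟪eT x, eU x⟫ := by
    have hcs : |⟪eT x, eU x⟫| ≤ ‖eT x‖ * ‖eU x‖ := abs_real_inner_le_norm _ _
    have h1 := (abs_le.mp hcs).1
    have hprod : ‖eT x‖ * ‖eU x‖ ≤ (1 - a) / 2 * ((1 - b) / 2) * ‖x‖ ^ 2 := by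
      nlinarith [norm_nonneg (eT x), norm_nonneg (eU x), norm_nonneg x]
    linarith
  rw [expand]
  nlinarith [sq_nonneg ‖x‖]

/-- Squaring preserves two-sided quadratic-form bounds. -/
lemma sq_bounds (V : F →L[ℝ] F) (β : ℝ) (hβ0 : 0 ≤ β)
    (hVs : ∀ x y : F, ⟪V x, y⟫ = ⟪x, V y⟫)
    (h1 : ∀ x : F, β * ‖x‖ ^ 2 ≤ ⟪x, V x⟫) (h2 : ∀ x : F, ⟪x, V x⟫ ≤ ‖x‖ ^ 2) :
    (∀ x : F, β ^ 2 * ‖x‖ ^ 2 ≤ ⟪x, (V * V) x⟫) ∧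
      (∀ x : F, ⟪x, (V * V) x⟫ ≤ ‖x‖ ^ 2) := by
  have hq : ∀ x : F, ⟪x, (V * V) x⟫ = ‖V x‖ ^ 2 := by
    intro x
    rw [ContinuousLinearMap.mul_apply, ← hVs, real_inner_self_eq_norm_sq]
  have hnV : ‖V‖ ≤ 1 := by
    apply opnorm_le_of_qf V hVs zero_le_one
    intro x
    rw [abs_le]
    constructor
    · nlinarith [h1 x, sq_nonneg ‖x‖]
    · simpa using h2 x
  constructor
  · intro x
    rw [hq]
    have hcs : ⟪x, V x⟫ ≤ ‖x‖ * ‖V x‖ := real_inner_le_norm x (V x)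
    have hl := h1 x
    rcases (norm_nonneg x).eq_or_lt with h0 | h0
    · rw [← h0]; simp
    · have h3 : β * ‖x‖ ^ 2 ≤ ‖x‖ * ‖V x‖ := le_trans hl hcs
      have h4 : β * ‖x‖ ≤ ‖V x‖ := by nlinarith
      nlinarith [mul_nonneg hβ0 (norm_nonneg x)]
  · intro x
    rw [hq]
    have h5 : ‖V x‖ ≤ ‖x‖ := le_trans (V.le_opNorm x)
      (by nlinarith [norm_nonneg x])
    nlinarith [norm_nonneg x, norm_nonneg (V x)]

end OpLemmas

section Bridge

variable {d : ℕ}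

lemma isSelfAdjoint_symm {F : Type*} [NormedAddCommGroup F] [InnerProductSpace ℝ F]
    [CompleteSpace F] {T : F →L[ℝ] F} (hT : IsSelfAdjoint T) (x y : F) :
    ⟪T x, y⟫ = ⟪x, T y⟫ := by
  conv_lhs => rw [← hT]
  rw [ContinuousLinearMap.star_eq_adjoint, ContinuousLinearMap.adjoint_inner_left]

lemma bridge_pos {M : Matrix (Fin d) (Fin d) ℝ} (hM : M.PosSemidef)
    (x : EuclideanSpace ℝ (Fin d)) : 0 ≤ ⟪x, Matrix.toEuclideanCLM (𝕜 := ℝ) M x⟫ := by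
  have h := hM.dotProduct_mulVec_nonneg (WithLp.ofLp x)
  rw [EuclideanSpace.inner_eq_star_dotProduct, Matrix.ofLp_toEuclideanCLM,
    dotProduct_comm]
  exact h

lemma bridge_sa {M : Matrix (Fin d) (Fin d) ℝ} (hM : M.IsHermitian) :
    IsSelfAdjoint (Matrix.toEuclideanCLM (𝕜 := ℝ) M) := by
  have h1 : star M = M := by rw [Matrix.star_eq_conjTranspose]; exact hM
  rw [IsSelfAdjoint, ← map_star, h1]

open scoped MatrixOrder in
noncomputable def matSqrt (M : Matrix (Fin d) (Fin d) ℝ) : Matrix (Fin d) (Fin d) ℝ := CFC.sqrt M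

open scoped MatrixOrder in
lemma matSqrt_posSemidef {M : Matrix (Fin d) (Fin d) ℝ} (_hM : M.PosSemidef) :
    (matSqrt M).PosSemidef :=
  Matrix.nonneg_iff_posSemidef.mp (CFC.sqrt_nonneg M)

open scoped MatrixOrder in
lemma matSqrt_mul_self {M : Matrix (Fin d) (Fin d) ℝ} (hM : M.PosSemidef) :
    matSqrt M * matSqrt M = M :=
  CFC.sqrt_mul_sqrt_self M hM.nonneg

end Bridge

/-- Spectral norm (operator 2-norm) of a real square matrix. -/
noncomputable def specNorm {d : ℕ} (A : Matrix (Fin d) (Fin d) ℝ) : ℝ :=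
  ‖Matrix.toEuclideanCLM (𝕜 := ℝ) A‖

set_option maxHeartbeats 2000000
set_option synthInstance.maxHeartbeats 1000000

/-- For K = 2^m (m ≥ 1) and symmetric positive definite A, B with
(1 - 1/(2K)) I ⪯ A ⪯ I and (1 - 1/(2K)) I ⪯ B ⪯ I, we have
(1/2)‖(AB)^K + (BA)^K‖ ≤ ‖(1/2)(AB + BA)‖^K. -/
theorem statement1 (m d : ℕ) (hm : 1 ≤ m) (hd : 1 ≤ d)
    (A B : Matrix (Fin d) (Fin d) ℝ) (hA : A.PosDef) (hB : B.PosDef)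
    (hA1 : (A - (1 - 1 / (2 * (2 ^ m : ℝ))) • 1).PosSemidef)
    (hA2 : ((1 : Matrix (Fin d) (Fin d) ℝ) - A).PosSemidef)
    (hB1 : (B - (1 - 1 / (2 * (2 ^ m : ℝ))) • 1).PosSemidef)
    (hB2 : ((1 : Matrix (Fin d) (Fin d) ℝ) - B).PosSemidef) :
    (1 / 2 : ℝ) * specNorm ((A * B) ^ (2 ^ m) + (B * A) ^ (2 ^ m)) ≤
      specNorm ((1 / 2 : ℝ) • (A * B + B * A)) ^ (2 ^ m) := by
  classical
  -- scalar bounds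
  set a : ℝ := 1 - 1 / (2 * (2 ^ m : ℝ)) with ha_def
  have h2m : (2 : ℝ) ≤ (2 : ℝ) ^ m := by
    calc (2 : ℝ) = 2 ^ 1 := (pow_one 2).symm
    _ ≤ 2 ^ m := pow_le_pow_right₀ one_le_two hm
  have h2m0 : (0 : ℝ) < (2 : ℝ) ^ m := by positivity
  have hε_le : 1 / (2 * (2 ^ m : ℝ)) ≤ 1 / 4 := by
    rw [div_le_div_iff₀ (by linarith) (by norm_num)]
    linarith
  have hε_pos : 0 < 1 / (2 * (2 ^ m : ℝ)) := by positivity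
  have ha0 : 0 ≤ a := by rw [ha_def]; linarith
  have ha1 : a ≤ 1 := by rw [ha_def]; linarith
  have ha34 : 3 / 4 ≤ a := by rw [ha_def]; linarith
  -- Bernoulli : a ^ (2 ^ m) ≥ 1/2, hence a ^ (2 ^ (m+1)) ≥ 1/4
  have hb_half : (1 : ℝ) / 2 ≤ a ^ (2 ^ m) := by
    have hber := one_add_mul_le_pow (a := -(1 / (2 * (2 ^ m : ℝ)))) (by linarith) (2 ^ m)
    have hcast : ((2 ^ m : ℕ) : ℝ) = (2 : ℝ) ^ m := by push_cast; ring
    rw [hcast] at hber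
    have he : 1 + (2 : ℝ) ^ m * (-(1 / (2 * (2 ^ m : ℝ)))) = 1 / 2 := by
      field_simp
      ring
    rw [he] at hber
    calc (1 : ℝ) / 2 ≤ (1 + -(1 / (2 * (2 ^ m : ℝ)))) ^ 2 ^ m := hber
    _ = a ^ (2 ^ m) := by rw [ha_def]; ring_nf
  have hquarter : (1 : ℝ) / 4 ≤ a ^ (2 ^ (m + 1)) := by
    have he : a ^ (2 ^ (m + 1)) = (a ^ (2 ^ m)) ^ 2 := by
      rw [← pow_mul, pow_succ]
    rw [he]
    nlinarith [pow_nonneg ha0 (2 ^ m)]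
  clear_value a
  -- operators
  set T := Matrix.toEuclideanCLM (𝕜 := ℝ) A with hT_def
  set U := Matrix.toEuclideanCLM (𝕜 := ℝ) B with hU_def
  have hTsa : IsSelfAdjoint T := bridge_sa hA.1
  have hUsa : IsSelfAdjoint U := bridge_sa hB.1
  have hTsymm := fun x y => isSelfAdjoint_symm hTsa x y
  have hUsymm := fun x y => isSelfAdjoint_symm hUsa x y
  -- quadratic form bounds for T and U
  have qf_lower : ∀ (M : Matrix (Fin d) (Fin d) ℝ), (M - a • 1).PosSemidef →
      ∀ x : EuclideanSpace ℝ (Fin d),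
        a * ‖x‖ ^ 2 ≤ ⟪x, Matrix.toEuclideanCLM (𝕜 := ℝ) M x⟫ := by
    intro M hM x
    have h := bridge_pos hM x
    rw [map_sub, map_smul, map_one] at h
    rw [ContinuousLinearMap.sub_apply, ContinuousLinearMap.smul_apply,
      ContinuousLinearMap.one_apply, inner_sub_right, real_inner_smul_right,
      real_inner_self_eq_norm_sq] at h
    linarith
  have qf_upper : ∀ (M : Matrix (Fin d) (Fin d) ℝ),
      ((1 : Matrix (Fin d) (Fin d) ℝ) - M).PosSemidef →
      ∀ x : EuclideanSpace ℝ (Fin d),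
        ⟪x, Matrix.toEuclideanCLM (𝕜 := ℝ) M x⟫ ≤ ‖x‖ ^ 2 := by
    intro M hM x
    have h := bridge_pos hM x
    rw [map_sub, map_one] at h
    rw [ContinuousLinearMap.sub_apply, ContinuousLinearMap.one_apply,
      inner_sub_right, real_inner_self_eq_norm_sq] at h
    linarith
  have hT1 : ∀ x, a * ‖x‖ ^ 2 ≤ ⟪x, T x⟫ := qf_lower A hA1
  have hT2 : ∀ x, ⟪x, T x⟫ ≤ ‖x‖ ^ 2 := qf_upper A hA2
  have hU1 : ∀ x, a * ‖x‖ ^ 2 ≤ ⟪x, U x⟫ := qf_lower B hB1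
  have hU2 : ∀ x, ⟪x, U x⟫ ≤ ‖x‖ ^ 2 := qf_upper B hB2
  -- square root of A
  set R : Matrix (Fin d) (Fin d) ℝ := matSqrt A with hR_def
  have hRps : R.PosSemidef := matSqrt_posSemidef hA.posSemidef
  have hRR : R * R = A := matSqrt_mul_self hA.posSemidef
  have hdetR : IsUnit R.det := by
    have hmul : R.det * R.det = A.det := by rw [← Matrix.det_mul, hRR]
    have hdetA : IsUnit A.det := hA.det_pos.ne'.isUnit
    exact isUnit_of_mul_isUnit_left (hmul ▸ hdetA)
  have hRinv : R * R⁻¹ = 1 := Matrix.mul_nonsing_inv R hdetR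
  set ρ := Matrix.toEuclideanCLM (𝕜 := ℝ) R with hρ_def
  set σ := Matrix.toEuclideanCLM (𝕜 := ℝ) R⁻¹ with hσ_def
  have hρσ : ∀ x, ρ (σ x) = x := by
    intro x
    rw [← ContinuousLinearMap.mul_apply, ← map_mul, hRinv, map_one,
      ContinuousLinearMap.one_apply]
  have hρ2 : ρ * ρ = T := by rw [hρ_def, hT_def, ← map_mul, hRR]
  have hρsa : IsSelfAdjoint ρ := bridge_sa hRps.1
  -- Q = ρ U ρ
  set Q := ρ * U * ρ with hQ_def
  have hQsa : IsSelfAdjoint Q := by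
    rw [IsSelfAdjoint, hQ_def, star_mul, star_mul, hρsa.star_eq, hUsa.star_eq, mul_assoc]
  have hQapp : ∀ x, Q x = ρ (U (ρ x)) := by
    intro x; rw [hQ_def, ContinuousLinearMap.mul_apply, ContinuousLinearMap.mul_apply]
  have hρnorm : ∀ x, ‖ρ x‖ ^ 2 = ⟪x, T x⟫ := by
    intro x
    rw [← real_inner_self_eq_norm_sq, isSelfAdjoint_symm hρsa,
      ← ContinuousLinearMap.mul_apply, hρ2]
  have hQform : ∀ x, ⟪x, Q x⟫ = ⟪ρ x, U (ρ x)⟫ := by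
    intro x
    rw [hQapp, ← isSelfAdjoint_symm hρsa]
  have hQ1 : ∀ x, a ^ 2 * ‖x‖ ^ 2 ≤ ⟪x, Q x⟫ := by
    intro x
    rw [hQform]
    have h1 := hU1 (ρ x)
    rw [hρnorm] at h1
    have h2 := hT1 x
    nlinarith [sq_nonneg ‖x‖]
  have hQ2 : ∀ x, ⟪x, Q x⟫ ≤ ‖x‖ ^ 2 := by
    intro x
    rw [hQform]
    have h1 := hU2 (ρ x)
    rw [hρnorm] at h1
    have h2 := hT2 x
    linarith
  -- bounds for powers of Q
  have hQpow : ∀ j : ℕ, IsSelfAdjoint (Q ^ (2 ^ j)) ∧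
      (∀ x, a ^ (2 ^ (j + 1)) * ‖x‖ ^ 2 ≤ ⟪x, (Q ^ (2 ^ j)) x⟫) ∧
      (∀ x, ⟪x, (Q ^ (2 ^ j)) x⟫ ≤ ‖x‖ ^ 2) := by
    intro j
    induction j with
    | zero =>
      refine ⟨by simpa using hQsa, fun x => ?_, fun x => ?_⟩
      · have := hQ1 x; simpa using this
      · have := hQ2 x; simpa using this
    | succ j ih =>
      obtain ⟨hsa, hl, hu⟩ := ih
      have hsymm := fun x y => isSelfAdjoint_symm hsa x y
      have hb := sq_bounds (Q ^ (2 ^ j)) (a ^ (2 ^ (j + 1)))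
        (pow_nonneg ha0 _) hsymm hl hu
      have hsq : Q ^ (2 ^ (j + 1)) = Q ^ (2 ^ j) * Q ^ (2 ^ j) := by
        rw [← pow_add]
        congr 1
        rw [pow_succ, Nat.mul_two]
      have hexp : (a ^ (2 ^ (j + 1))) ^ 2 = a ^ (2 ^ (j + 1 + 1)) := by
        rw [← pow_mul, pow_succ (2 : ℕ) (j + 1)]
      refine ⟨?_, fun x => ?_, fun x => ?_⟩
      · rw [hsq, IsSelfAdjoint, star_mul, hsa.star_eq]
      · rw [hsq, ← hexp]
        exact hb.1 x
      · rw [hsq]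
        exact hb.2 x
  -- intertwining identity
  have hcomm : ∀ n : ℕ, (T * U) ^ n * ρ = ρ * Q ^ n := by
    intro n
    induction n with
    | zero => simp
    | succ n ih =>
      have h1 : T * U * ρ = ρ * Q := by
        rw [← hρ2, hQ_def]
        simp [mul_assoc]
      calc (T * U) ^ (n + 1) * ρ = (T * U) ^ n * (T * U * ρ) := by
            rw [pow_succ, mul_assoc]
        _ = (T * U) ^ n * (ρ * Q) := by rw [h1]
        _ = ((T * U) ^ n * ρ) * Q := by rw [mul_assoc]
        _ = ρ * Q ^ n * Q := by rw [ih]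
        _ = ρ * Q ^ (n + 1) := by rw [mul_assoc, ← pow_succ]
  -- positivity of the numerical range of (T U)^(2^j) for j ≤ m
  have hpos : ∀ j : ℕ, j ≤ m → ∀ x, 0 ≤ ⟪x, ((T * U) ^ (2 ^ j)) x⟫ := by
    intro j hj x
    obtain ⟨hsaQ, hlQ, huQ⟩ := hQpow j
    have hsymQ := fun x y => isSelfAdjoint_symm hsaQ x y
    have hx : ρ (σ x) = x := hρσ x
    have e1 : ((T * U) ^ (2 ^ j)) (ρ (σ x)) = ρ ((Q ^ (2 ^ j)) (σ x)) := by
      rw [← ContinuousLinearMap.mul_apply, hcomm (2 ^ j), ContinuousLinearMap.mul_apply]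
    have e : ⟪x, ((T * U) ^ (2 ^ j)) x⟫ = ⟪T (σ x), (Q ^ (2 ^ j)) (σ x)⟫ := by
      conv_lhs => rw [← hx]
      rw [e1, isSelfAdjoint_symm hρsa (σ x)]
      have h2 : ρ (ρ ((Q ^ (2 ^ j)) (σ x))) = T ((Q ^ (2 ^ j)) (σ x)) := by
        rw [← ContinuousLinearMap.mul_apply, hρ2]
      rw [h2, ← isSelfAdjoint_symm hTsa]
    rw [e]
    have hcond : 2 ≤ (1 + a) * (1 + a ^ (2 ^ (j + 1))) := by
      have h1 : a ^ (2 ^ (m + 1)) ≤ a ^ (2 ^ (j + 1)) :=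
        pow_le_pow_of_le_one ha0 ha1 (Nat.pow_le_pow_right (by norm_num) (by omega))
      have hb4 : (1 : ℝ) / 4 ≤ a ^ (2 ^ (j + 1)) := le_trans hquarter h1
      nlinarith [mul_nonneg (by linarith : (0:ℝ) ≤ a - 3/4)
        (by linarith : (0:ℝ) ≤ a ^ (2 ^ (j + 1)) - 1/4)]
    exact inner_mul_nonneg T (Q ^ (2 ^ j)) a (a ^ (2 ^ (j + 1))) ha0 ha1
      (pow_nonneg ha0 _) (pow_le_one₀ ha0 ha1) hTsymm hsymQ hT1 hT2 hlQ huQ hcond (σ x)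
  -- the sequence g j
  set g : ℕ → (EuclideanSpace ℝ (Fin d) →L[ℝ] EuclideanSpace ℝ (Fin d)) :=
    fun j => (T * U) ^ (2 ^ j) + (U * T) ^ (2 ^ j) with hg_def
  have hUTstar : U * T = star (T * U) := by
    rw [star_mul, hTsa.star_eq, hUsa.star_eq]
  have hUTpow : ∀ n : ℕ, (U * T) ^ n = star ((T * U) ^ n) := by
    intro n; rw [hUTstar, ← star_pow]
  have hg_sa : ∀ j, IsSelfAdjoint (g j) := by
    intro j
    rw [IsSelfAdjoint, hg_def]
    simp only [hUTpow, star_add, star_star]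
    exact IsSelfAdjoint.add_star_self ((T * U) ^ 2 ^ j)
  have hg_form : ∀ j x, ⟪x, g j x⟫ = 2 * ⟪x, ((T * U) ^ (2 ^ j)) x⟫ := by
    intro j x
    have h2 : ⟪x, ((U * T) ^ (2 ^ j)) x⟫ = ⟪x, ((T * U) ^ (2 ^ j)) x⟫ := by
      rw [hUTpow, ContinuousLinearMap.star_eq_adjoint,
        ContinuousLinearMap.adjoint_inner_right, real_inner_comm]
    rw [hg_def]
    simp only [ContinuousLinearMap.add_apply, inner_add_right, h2]
    ring
  have hg_pos : ∀ j, j ≤ m → ∀ x, 0 ≤ ⟪x, g j x⟫ := by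
    intro j hj x
    rw [hg_form]
    have := hpos j hj x
    linarith
  -- halving step
  have hg_step : ∀ j, j + 1 ≤ m → ‖g (j + 1)‖ ≤ 1 / 2 * ‖g j‖ ^ 2 := by
    intro j hj
    have hsplit : (2 : ℕ) ^ (j + 1) = 2 ^ j + 2 ^ j := by
      rw [pow_succ, Nat.mul_two]
    have hP2 : (T * U) ^ (2 ^ (j + 1)) = (T * U) ^ (2 ^ j) * (T * U) ^ (2 ^ j) := by
      rw [← pow_add, hsplit]
    have hP2' : (U * T) ^ (2 ^ (j + 1)) = (U * T) ^ (2 ^ j) * (U * T) ^ (2 ^ j) := by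
      rw [← pow_add, hsplit]
    have hqf : ∀ x, ⟪x, g (j + 1) x⟫ =
        2 * ⟪((T * U) ^ (2 ^ j)) x, (star ((T * U) ^ (2 ^ j))) x⟫ := by
      intro x
      have e1 : ⟪x, ((T * U) ^ (2 ^ (j + 1))) x⟫ =
          ⟪(star ((T * U) ^ (2 ^ j))) x, ((T * U) ^ (2 ^ j)) x⟫ := by
        rw [hP2, ContinuousLinearMap.mul_apply, ContinuousLinearMap.star_eq_adjoint,
          ← ContinuousLinearMap.adjoint_inner_left]
      have e2 : ⟪x, ((U * T) ^ (2 ^ (j + 1))) x⟫ =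
          ⟪((T * U) ^ (2 ^ j)) x, (star ((T * U) ^ (2 ^ j))) x⟫ := by
        rw [hP2', ContinuousLinearMap.mul_apply, hUTpow,
          ContinuousLinearMap.star_eq_adjoint, ContinuousLinearMap.adjoint_inner_right]
      rw [hg_def]
      simp only [ContinuousLinearMap.add_apply, inner_add_right]
      rw [e1, e2, real_inner_comm]
      ring
    have hbound : ∀ x, |⟪x, g (j + 1) x⟫| ≤ (1 / 2 * ‖g j‖ ^ 2) * ‖x‖ ^ 2 := by
      intro x
      set y := ((T * U) ^ (2 ^ j)) x with hy_def
      set z := (star ((T * U) ^ (2 ^ j))) x with hz_def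
      have hyz : g j x = y + z := by
        rw [hg_def]
        simp only [ContinuousLinearMap.add_apply]
        rw [hUTpow]
      have hgx : ‖y + z‖ ≤ ‖g j‖ * ‖x‖ := by
        rw [← hyz]; exact (g j).le_opNorm x
      have hup : ⟪x, g (j + 1) x⟫ ≤ 1 / 2 * ‖y + z‖ ^ 2 := by
        rw [hqf]
        nlinarith [norm_sub_sq_real y z, norm_add_sq_real y z, sq_nonneg ‖y - z‖]
      have hlow : 0 ≤ ⟪x, g (j + 1) x⟫ := hg_pos (j + 1) hj x
      have hsq : ‖y + z‖ ^ 2 ≤ (‖g j‖ * ‖x‖) ^ 2 := by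
        nlinarith [norm_nonneg (y + z), norm_nonneg x,
          mul_nonneg (norm_nonneg (g j)) (norm_nonneg x)]
      rw [abs_le]
      constructor
      · nlinarith [sq_nonneg ‖x‖, sq_nonneg ‖g j‖]
      · calc ⟪x, g (j + 1) x⟫ ≤ 1 / 2 * ‖y + z‖ ^ 2 := hup
          _ ≤ 1 / 2 * (‖g j‖ * ‖x‖) ^ 2 := by linarith
          _ = (1 / 2 * ‖g j‖ ^ 2) * ‖x‖ ^ 2 := by ring
    exact opnorm_le_of_qf (g (j + 1)) (fun x y => isSelfAdjoint_symm (hg_sa (j + 1)) x y)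
      (by positivity) hbound
  -- recursion
  have hrec : ∀ j, j ≤ m → ‖g j‖ ≤ 2 * (‖g 0‖ / 2) ^ (2 ^ j) := by
    intro j
    induction j with
    | zero =>
      intro _
      rw [pow_zero, pow_one]
      linarith [norm_nonneg (g 0)]
    | succ j ih =>
      intro hj
      have h1 := ih (by omega)
      have h2 := hg_step j hj
      have h3 : (0 : ℝ) ≤ (‖g 0‖ / 2) ^ (2 ^ j) := by positivity
      have hexp : ((‖g 0‖ / 2) ^ (2 ^ j)) ^ 2 = (‖g 0‖ / 2) ^ (2 ^ (j + 1)) := by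
        rw [← pow_mul, pow_succ]
      calc ‖g (j + 1)‖ ≤ 1 / 2 * ‖g j‖ ^ 2 := h2
        _ ≤ 1 / 2 * (2 * (‖g 0‖ / 2) ^ (2 ^ j)) ^ 2 := by
            nlinarith [norm_nonneg (g j)]
        _ = 2 * ((‖g 0‖ / 2) ^ (2 ^ j)) ^ 2 := by ring
        _ = 2 * (‖g 0‖ / 2) ^ (2 ^ (j + 1)) := by rw [hexp]
  have hmain := hrec m le_rfl
  -- translate the goal
  have hLHS : specNorm ((A * B) ^ 2 ^ m + (B * A) ^ 2 ^ m) = ‖g m‖ := by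
    rw [specNorm]
    congr 1
    rw [map_add, map_pow, map_pow, map_mul, map_mul, hg_def]
  have hRHS : specNorm ((1 / 2 : ℝ) • (A * B + B * A)) = ‖g 0‖ / 2 := by
    have h0 : g 0 = T * U + U * T := by rw [hg_def]; norm_num
    rw [specNorm, map_smul, map_add, map_mul, map_mul, h0]
    have hns := norm_smul ((1:ℝ)/2) (T * U + U * T)
    rw [hns, Real.norm_eq_abs]
    rw [abs_of_pos (by norm_num : (0:ℝ) < 1/2)]
    ring
  rw [hLHS, hRHS]
  linarith
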